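/- Let P be a finite nonempty type, E = EuclideanSpace ℝ (Fin n), f : P → E → E a family of continuously differentiable vector fields, and τd > 0 a dwell time. A set I ⊆ E is invariant for slow switching with dwell time τd (i.e., for every switching signal (τ, σ) with τ (i+1) − τ i ≥ τd for all i, every T ≥ 0, and every solution φ of the switched system from some ω ∈ I following (τ, σ) up to time T, one has φ T ∈ I) if and only if I is invariant for each constituent ODE individually (i.e., for every p : P, every t ≥ 0, and every φ : ℝ → E with φ 0 ∈ I that has derivative f p (φ s) within Set.Icc 0 t at every s ∈ Set.Icc 0 t, one has φ t ∈ I). -/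

import Mathlib

/-- `(τ, σ)` is a switching signal. -/
def IsSwitchingSignal (P : Type*) (τ : ℕ → ℝ) (σ : ℕ → P) : Prop :=
  StrictMono τ ∧ τ 0 = 0 ∧ Filter.Tendsto τ Filter.atTop Filter.atTop

/-- `φ` is a solution of the switched system `f` from `ω` following `(τ, σ)` up to time `T`. -/
def IsSwitchedSolution {n : ℕ} {P : Type*}
    (f : P → EuclideanSpace ℝ (Fin n) → EuclideanSpace ℝ (Fin n))
    (τ : ℕ → ℝ) (σ : ℕ → P) (ω : EuclideanSpace ℝ (Fin n)) (T : ℝ)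
    (φ : ℝ → EuclideanSpace ℝ (Fin n)) : Prop :=
  Continuous φ ∧ φ 0 = ω ∧
    ∀ i : ℕ, 1 ≤ i → ∀ s ∈ Set.Icc (τ (i - 1)) (τ i) ∩ Set.Icc (0 : ℝ) T,
      HasDerivWithinAt φ (f (σ i) (φ s)) (Set.Icc (τ (i - 1)) (τ i)) s

set_option maxHeartbeats 1000000 in
theorem slow_switching_invariance {n : ℕ} {P : Type*} [Fintype P] [Nonempty P]
    (f : P → EuclideanSpace ℝ (Fin n) → EuclideanSpace ℝ (Fin n))
    (hf : ∀ p, ContDiff ℝ 1 (f p))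
    (τd : ℝ) (hτd : 0 < τd) (I : Set (EuclideanSpace ℝ (Fin n))) :
    (∀ (τ : ℕ → ℝ) (σ : ℕ → P), IsSwitchingSignal P τ σ →
      (∀ i : ℕ, τd ≤ τ (i + 1) - τ i) →
      ∀ T : ℝ, 0 ≤ T → ∀ ω ∈ I, ∀ φ : ℝ → EuclideanSpace ℝ (Fin n),
        IsSwitchedSolution f τ σ ω T φ → φ T ∈ I) ↔
    (∀ p : P, ∀ t : ℝ, 0 ≤ t → ∀ φ : ℝ → EuclideanSpace ℝ (Fin n), φ 0 ∈ I →
      (∀ s ∈ Set.Icc (0 : ℝ) t, HasDerivWithinAt φ (f p (φ s)) (Set.Icc (0 : ℝ) t) s) →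
      φ t ∈ I) := by
  constructor
  · -- switched invariance → individual invariance
    intro H p t ht φ hφ0 hφ
    obtain ⟨g, hg0, ε, hε, hg⟩ :=
      ContDiffAt.exists_forall_mem_closedBall_exists_eq_forall_mem_Ioo_hasDerivAt₀
        ((hf p).contDiffAt (x := φ t)) t
    set ε' : ℝ := ε / 2 with hε'def
    have hε' : 0 < ε' := half_pos hε
    have hφc : ContinuousOn φ (Set.Icc 0 t) := fun s hs => (hφ s hs).continuousWithinAt
    have hgc : ContinuousOn g (Set.Ioo (t - ε) (t + ε)) := fun s hs =>
      (hg s hs).continuousAt.continuousWithinAt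
    set A : ℝ → EuclideanSpace ℝ (Fin n) := fun s => φ (max 0 (min s t)) with hA
    set B : ℝ → EuclideanSpace ℝ (Fin n) := fun s => g (max t (min s (t + ε'))) with hB
    have hAc : Continuous A := by
      apply hφc.comp_continuous (continuous_const.max (continuous_id.min continuous_const))
      intro s
      exact ⟨le_max_left _ _, max_le ht (min_le_right _ _)⟩
    have hBc : Continuous B := by
      apply hgc.comp_continuous (continuous_const.max (continuous_id.min continuous_const))
      intro s
      constructor
      · have : t - ε < t := by linarith
        exact this.trans_le (le_max_left _ _)
      · have h1 : min s (t + ε') ≤ t + ε' := min_le_right _ _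
        have h2 : t ≤ t + ε' := by linarith
        have : max t (min s (t + ε')) ≤ t + ε' := max_le h2 h1
        exact this.trans_lt (by dsimp [ε']; linarith)
    set φ' : ℝ → EuclideanSpace ℝ (Fin n) := fun s => if s ≤ t then A s else B s with hφ'
    have hAt : A t = φ t := by
      show φ (max 0 (min t t)) = φ t
      rw [min_self, max_eq_right ht]
    have hBt : B t = g t := by
      show g (max t (min t (t + ε'))) = g t
      rw [min_eq_left (by linarith : t ≤ t + ε'), max_self]
    have hφ'eq : ∀ u ∈ Set.Icc (0 : ℝ) t, φ' u = φ u := by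
      intro u hu
      show (if u ≤ t then A u else B u) = φ u
      rw [if_pos hu.2]
      show φ (max 0 (min u t)) = φ u
      rw [min_eq_left hu.2, max_eq_right hu.1]
    have hφ'c : Continuous φ' := by
      apply hAc.if_le hBc continuous_id continuous_const
      intro x hx
      simp only [id] at hx
      rw [hx, hAt, hBt, hg0]
    have hφ'0 : φ' 0 = φ 0 := hφ'eq 0 ⟨le_rfl, ht⟩
    have hφ't : φ' t = φ t := hφ'eq t ⟨ht, le_rfl⟩
    -- signal
    set c : ℝ := t + τd with hc
    have hcpos : 0 < c := by positivity
    set τ : ℕ → ℝ := fun i => (i : ℝ) * c with hτ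
    have hsig : IsSwitchingSignal P τ (fun _ => p) := by
      refine ⟨fun a b hab => ?_, by simp [hτ], ?_⟩
      · exact mul_lt_mul_of_pos_right (by exact_mod_cast hab) hcpos
      · exact (tendsto_natCast_atTop_atTop).atTop_mul_const hcpos
    have key : φ' t ∈ I := by
      apply H τ (fun _ => p) hsig ?_ t ht (φ 0) hφ0 φ'
      · refine ⟨hφ'c, hφ'0, ?_⟩
        intro i hi s hs
        rcases Nat.exists_eq_add_of_le hi with ⟨j, rfl⟩
        rcases Nat.eq_zero_or_pos j with hj | hj
        · -- first interval [0, c]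
          subst hj
          have hτ0 : τ (1 + 0 - 1) = 0 := by simp [hτ]
          have hτ1 : τ (1 + 0) = c := by norm_num [hτ]
          rw [hτ0, hτ1] at hs ⊢
          have hs' : s ∈ Set.Icc 0 t := ⟨hs.1.1, hs.2.2⟩
          have hders : HasDerivWithinAt φ' (f p (φ' s)) (Set.Icc 0 t) s := by
            rw [hφ'eq s hs']
            exact (hφ s hs').congr hφ'eq (hφ'eq s hs')
          rcases lt_or_eq_of_le hs'.2 with hst | hst
          · -- s < t
            refine hders.mono_of_mem_nhdsWithin ?_
            rw [mem_nhdsWithin]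
            exact ⟨Set.Iio t, isOpen_Iio, hst, fun u hu => ⟨hu.2.1, le_of_lt hu.1⟩⟩
          · -- s = t
            subst hst
            have hR : HasDerivWithinAt φ' (f p (φ' s)) (Set.Icc s (s + τd)) s := by
              have hgs : HasDerivWithinAt g (f p (g s)) (Set.Icc s (s + τd)) s :=
                (hg s ⟨by linarith, by linarith⟩).hasDerivWithinAt
              have hmem : Set.Iio (s + ε') ∈ nhdsWithin s (Set.Icc s (s + τd)) :=
                mem_nhdsWithin_of_mem_nhds (Iio_mem_nhds (by linarith))
              have hev : φ' =ᶠ[nhdsWithin s (Set.Icc s (s + τd))] g := by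
                filter_upwards [hmem, self_mem_nhdsWithin] with u hu1 hu2
                by_cases h : u ≤ s
                · have : u = s := le_antisymm h hu2.1
                  rw [this]
                  show φ' s = g s
                  rw [hφ't, hg0]
                · push_neg at h
                  have h1 : min u (s + ε') = u := min_eq_left (le_of_lt hu1)
                  have h2 : max s u = u := max_eq_right (le_of_lt h)
                  simp only [hφ', if_neg (not_le.mpr h), hB, h1, h2]
              have : φ' s = g s := by rw [hφ't, hg0]
              rw [hφ't, ← hg0]
              exact hgs.congr_of_eventuallyEq hev this
            have hunion := hders.union hR
            rwa [Set.Icc_union_Icc_eq_Icc ht (by linarith)] at hunion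
        · -- later intervals: intersection is empty
          exfalso
          have h1 : (1 : ℕ) ≤ 1 + j - 1 := by omega
          have hτle : τ 1 ≤ τ (1 + j - 1) := hsig.1.monotone h1
          have hτ1 : τ 1 = c := by norm_num [hτ]
          have : c ≤ s := by rw [← hτ1]; exact le_trans hτle hs.1.1
          have : s ≤ t := hs.2.2
          have : t + τd ≤ t := by dsimp [c] at *; linarith
          linarith
      · intro i
        have : τ (i + 1) - τ i = c := by
          simp only [hτ]; push_cast; ring
        rw [this]; dsimp [c]; linarith
    rwa [hφ't] at key
  · -- individual invariance → switched invariance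
    intro H τ σ hsig hdwell T hT ω hω φ hsol
    obtain ⟨hcont, hφ0, hder⟩ := hsol
    have hτ0 : τ 0 = 0 := hsig.2.1
    have hτnn : ∀ i, 0 ≤ τ i := fun i => hτ0 ▸ hsig.1.monotone (Nat.zero_le i)
    have key : ∀ i : ℕ, ∀ u : ℝ, 0 ≤ u → u ≤ T → u ≤ τ i → φ u ∈ I := by
      intro i
      induction i with
      | zero =>
        intro u h0u huT huτ
        have : u = 0 := le_antisymm (huτ.trans_eq hτ0) h0u
        rw [this, hφ0]; exact hω
      | succ i ih =>
        intro u h0u huT huτ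
        by_cases hc : u ≤ τ i
        · exact ih u h0u huT hc
        · push_neg at hc
          set a := τ i with ha
          have ha0 : 0 ≤ a := hτnn i
          have haI : φ a ∈ I := ih a ha0 (le_trans (le_of_lt hc) huT) le_rfl
          have hmain := H (σ (i + 1)) (u - a) (by linarith) (fun s => φ (s + a))
            (by simpa using haI) ?_
          · simpa using hmain
          · intro s hs
            have hr : s + a ∈ Set.Icc (τ (i + 1 - 1)) (τ (i + 1)) ∩ Set.Icc 0 T := by
              simp only [Nat.add_sub_cancel]
              constructor
              · constructor
                · rw [← ha]; linarith [hs.1]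
                · have := hs.2; linarith [huτ]
              · constructor
                · linarith [hs.1]
                · have := hs.2; linarith
            have hd := hder (i + 1) (by omega) (s + a) hr
            simp only [Nat.add_sub_cancel] at hd
            have htr : HasDerivWithinAt (fun x : ℝ => x + a) 1 (Set.Icc 0 (u - a)) s :=
              (hasDerivWithinAt_id s _).add_const a
            have hmaps : Set.MapsTo (fun x : ℝ => x + a) (Set.Icc 0 (u - a))
                (Set.Icc (τ i) (τ (i + 1))) := by
              intro x hx
              have hx1 := hx.1
              have hx2 := hx.2
              constructor
              · show τ i ≤ x + a
                rw [← ha]; linarith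
              · show x + a ≤ τ (i + 1)
                linarith [huτ]
            have := hd.scomp s htr hmaps
            simp only [one_smul] at this
            exact this
    obtain ⟨i, hi⟩ := (hsig.2.2.eventually_ge_atTop T).exists
    exact key i T hT le_rfl hi
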